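/- Consider the extended system matrices 𝒜 = [[A, B_d],[0, I_q]] and 𝒞 = [C, 0]. If the pair (A, C) is detectable and the transfer matrix G_d(z) = C (zI − A)^{-1} B_d has no transmission zero at z = 1 (i.e., the matrix [[A − I, B_d],[C, 0]] has full column rank), then the pair (𝒜, 𝒞) is detectable. -/

import Mathlib

lemma rank_full_iff {K : Type*} [Field K] {m l : Type*} [Fintype m] [Fintype l]
    (M : Matrix m l K) : M.rank = Fintype.card l ↔ ∀ v, M.mulVec v = 0 → v = 0 := by
  have h := LinearMap.finrank_range_add_finrank_ker M.mulVecLin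
  rw [Module.finrank_fintype_fun_eq_card] at h
  rw [← Matrix.ker_mulVecLin_eq_bot_iff, Matrix.rank]
  constructor
  · intro hr
    have h0 : Module.finrank K (LinearMap.ker M.mulVecLin) = 0 := by omega
    exact Submodule.finrank_eq_zero.mp h0
  · intro hk
    rw [hk, finrank_bot] at h
    omega

lemma ofReal_mulVec_eq_zero {m l : Type*} [Fintype m] [Fintype l]
    (M : Matrix m l ℝ) (h : ∀ w : l → ℝ, M.mulVec w = 0 → w = 0)
    (v : l → ℂ) (hv : (M.map (Complex.ofReal ·)).mulVec v = 0) : v = 0 := by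
  have hre : (fun j => (v j).re) = 0 := by
    apply h
    funext i
    have h0 := congrFun hv i
    simp only [Matrix.mulVec, dotProduct, Matrix.map_apply, Pi.zero_apply] at h0 ⊢
    have := congrArg Complex.re h0
    simpa [Complex.re_sum, Complex.re_ofReal_mul] using this
  have him : (fun j => (v j).im) = 0 := by
    apply h
    funext i
    have h0 := congrFun hv i
    simp only [Matrix.mulVec, dotProduct, Matrix.map_apply, Pi.zero_apply] at h0 ⊢
    have := congrArg Complex.im h0
    simpa [Complex.im_sum, Complex.im_ofReal_mul] using this
  funext j
  exact Complex.ext (congrFun hre j) (congrFun him j)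

/-- If `(A, C)` is detectable and the plant has no transmission zero at `z = 1` on the
`d → y` channel, then the extended pair `(𝒜, 𝒞)` (state augmented with a constant
disturbance) is detectable. -/
theorem extended_pair_detectable
    {n q p : ℕ} (A : Matrix (Fin n) (Fin n) ℝ)
    (Bd : Matrix (Fin n) (Fin q) ℝ) (C : Matrix (Fin p) (Fin n) ℝ)
    (hq : q ≤ p)
    (hdet : ∀ μ ∈ spectrum ℂ (A.map (Complex.ofReal ·)), 1 ≤ ‖μ‖ →
      (Matrix.fromRows (μ • (1 : Matrix (Fin n) (Fin n) ℂ) - A.map (Complex.ofReal ·))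
        (C.map (Complex.ofReal ·))).rank = n)
    (hzero : (Matrix.fromBlocks (A - 1) Bd C (0 : Matrix (Fin p) (Fin q) ℝ)).rank = n + q) :
    ∀ μ ∈ spectrum ℂ ((Matrix.fromBlocks A Bd 0 (1 : Matrix (Fin q) (Fin q) ℝ)).map
        (Complex.ofReal ·)), 1 ≤ ‖μ‖ →
      (Matrix.fromRows
        (μ • (1 : Matrix (Fin n ⊕ Fin q) (Fin n ⊕ Fin q) ℂ) -
          (Matrix.fromBlocks A Bd 0 (1 : Matrix (Fin q) (Fin q) ℝ)).map (Complex.ofReal ·))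
        ((Matrix.fromCols C (0 : Matrix (Fin p) (Fin q) ℝ)).map (Complex.ofReal ·))).rank
        = n + q := by
  intro μ _hμ hnorm
  set Ac := A.map (Complex.ofReal ·) with hAcdef
  set Bc := Bd.map (Complex.ofReal ·) with hBcdef
  set Cc := C.map (Complex.ofReal ·) with hCcdef
  have hmap : (Matrix.fromBlocks A Bd 0 (1 : Matrix (Fin q) (Fin q) ℝ)).map (Complex.ofReal ·)
      = Matrix.fromBlocks Ac Bc 0 1 := by
    rw [Matrix.fromBlocks_map, Matrix.map_zero _ Complex.ofReal_zero,
      Matrix.map_one _ Complex.ofReal_zero Complex.ofReal_one]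
  have hcols : (Matrix.fromCols C (0 : Matrix (Fin p) (Fin q) ℝ)).map (Complex.ofReal ·)
      = Matrix.fromCols Cc (0 : Matrix (Fin p) (Fin q) ℂ) := by
    ext i j
    cases j <;> simp [Matrix.fromCols, hCcdef]
  rw [hmap, hcols, show n + q = Fintype.card (Fin n ⊕ Fin q) by simp]
  refine (rank_full_iff _).mpr ?_
  intro v hv
  set x : Fin n → ℂ := v ∘ Sum.inl with hxdef
  set d : Fin q → ℂ := v ∘ Sum.inr with hddef
  have hvelim : v = Sum.elim x d := by funext i; cases i <;> rfl
  rw [Matrix.fromRows_mulVec] at hv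
  have hv1 : (μ • (1 : Matrix (Fin n ⊕ Fin q) (Fin n ⊕ Fin q) ℂ)
      - Matrix.fromBlocks Ac Bc 0 1).mulVec v = 0 :=
    funext fun i => congrFun hv (Sum.inl i)
  have hv2 : Cc.mulVec x = 0 := by
    have h2 : (Matrix.fromCols Cc (0 : Matrix (Fin p) (Fin q) ℂ)).mulVec v = 0 :=
      funext fun i => congrFun hv (Sum.inr i)
    rw [hvelim, Matrix.fromCols_mulVec_sumElim, Matrix.zero_mulVec, add_zero] at h2
    exact h2
  rw [Matrix.sub_mulVec, Matrix.smul_mulVec, Matrix.one_mulVec, hvelim,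
    Matrix.fromBlocks_mulVec] at hv1
  simp only [Sum.elim_comp_inl, Sum.elim_comp_inr, Matrix.zero_mulVec, Matrix.one_mulVec,
    zero_add] at hv1
  have htop : μ • x - (Ac.mulVec x + Bc.mulVec d) = 0 := by
    funext i
    have := congrFun hv1 (Sum.inl i)
    simpa using this
  have hbot : ∀ i, (μ - 1) * d i = 0 := by
    intro i
    have h := congrFun hv1 (Sum.inr i)
    simp only [Pi.sub_apply, Pi.smul_apply, Sum.elim_inr, Pi.zero_apply, smul_eq_mul] at h
    rw [sub_mul, one_mul]
    exact h
  by_cases hμ1 : μ = 1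
  · subst hμ1
    have hcard : Fintype.card (Fin n ⊕ Fin q) = n + q := by simp
    have hker := (rank_full_iff
      (Matrix.fromBlocks (A - 1) Bd C (0 : Matrix (Fin p) (Fin q) ℝ))).mp
      (by rw [hzero, hcard])
    apply ofReal_mulVec_eq_zero _ hker
    have hmap2 : (Matrix.fromBlocks (A - 1) Bd C
        (0 : Matrix (Fin p) (Fin q) ℝ)).map (Complex.ofReal ·)
        = Matrix.fromBlocks (Ac - 1) Bc Cc 0 := by
      have h1m : (A - 1).map (Complex.ofReal ·) = Ac - 1 := by
        ext i j
        by_cases hij : i = j <;>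
          simp [Matrix.map_apply, Matrix.sub_apply, Matrix.one_apply, hij, hAcdef]
      rw [Matrix.fromBlocks_map, Matrix.map_zero _ Complex.ofReal_zero, h1m]
    rw [hmap2, hvelim, Matrix.fromBlocks_mulVec]
    simp only [Sum.elim_comp_inl, Sum.elim_comp_inr]
    have h1 : (Ac - 1).mulVec x + Bc.mulVec d = 0 := by
      rw [Matrix.sub_mulVec, Matrix.one_mulVec]
      rw [one_smul, sub_eq_zero] at htop
      rw [sub_add_eq_add_sub, sub_eq_zero]
      exact htop.symm
    rw [h1, Matrix.zero_mulVec, add_zero, hv2]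
    funext i
    cases i <;> rfl
  · have hd : d = 0 := by
      funext i
      rcases mul_eq_zero.mp (hbot i) with h | h
      · exact absurd (sub_eq_zero.mp h) hμ1
      · exact h
    have hx0 : (μ • (1 : Matrix (Fin n) (Fin n) ℂ) - Ac).mulVec x = 0 := by
      rw [Matrix.sub_mulVec, Matrix.smul_mulVec, Matrix.one_mulVec]
      rw [hd, Matrix.mulVec_zero, add_zero] at htop
      exact htop
    have hx : x = 0 := by
      by_cases hspec : μ ∈ spectrum ℂ Ac
      · have hr := hdet μ hspec hnorm
        have hker := (rank_full_iff
          (Matrix.fromRows (μ • (1 : Matrix (Fin n) (Fin n) ℂ) - Ac) Cc)).mp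
          (by rw [hr]; simp)
        apply hker
        rw [Matrix.fromRows_mulVec]
        funext i
        cases i with
        | inl i => simpa using congrFun hx0 i
        | inr i => simpa using congrFun hv2 i
      · rw [spectrum.notMem_iff] at hspec
        rw [Algebra.algebraMap_eq_smul_one] at hspec
        have hdetu : IsUnit (μ • (1 : Matrix (Fin n) (Fin n) ℂ) - Ac).det :=
          (Matrix.isUnit_iff_isUnit_det _).mp hspec
        calc x = (1 : Matrix (Fin n) (Fin n) ℂ).mulVec x := (Matrix.one_mulVec x).symm
          _ = ((μ • (1 : Matrix (Fin n) (Fin n) ℂ) - Ac)⁻¹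
              * (μ • (1 : Matrix (Fin n) (Fin n) ℂ) - Ac)).mulVec x := by
            rw [Matrix.nonsing_inv_mul _ hdetu]
          _ = (μ • (1 : Matrix (Fin n) (Fin n) ℂ) - Ac)⁻¹.mulVec
              ((μ • (1 : Matrix (Fin n) (Fin n) ℂ) - Ac).mulVec x) := by
            rw [Matrix.mulVec_mulVec]
          _ = 0 := by rw [hx0, Matrix.mulVec_zero]
    rw [hvelim, hx, hd]
    funext i
    cases i <;> rfl
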